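/- Let ({f_n}_n, {τ_n}_n) and ({g_n}_n, {ω_n}_n) be two Lipschitz p-SFs for a subset M of a Banach space X such that ({g_n}_n, {ω_n}_n) is orthogonal to ({f_n}_n, {τ_n}_n). Let A, B : M → M be bi-Lipschitz maps, let C, D : X → X be bounded linear operators with C(M) ⊆ M and D(M) ⊆ M, suppose C(Ax) + D(Bx) = x for all x ∈ M, and suppose Cτ_n + Dω_n ∈ M for all n ∈ ℕ. Then ({f_n ∘ A + g_n ∘ B}_n, {Cτ_n + Dω_n}_n) is a Lipschitz p-SF for M. In particular, if scalars a, b, c, d satisfy ca + db = 1 and cτ_n + dω_n ∈ M for all n, then ({a f_n + b g_n}_n, {c τ_n + d ω_n}_n) is a Lipschitz p-SF for M. -/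

import Mathlib

open Filter
open scoped ENNReal NNReal

noncomputable section

/-- A Lipschitz p-approximate Schauder frame for a subset `M` of a Banach space `X`:
`f` is the sequence of Lipschitz "analysis" functions, `τ` the sequence of frame vectors
(elements of `M`), `θf` the analysis map, `θτ` the synthesis operator, `S` the frame map
(an invertible bi-Lipschitz map of `M` with inverse `Sinv`), together with the
reconstruction property. -/
structure LipPASF (𝕂 : Type*) [RCLike 𝕂] (X : Type*) [NormedAddCommGroup X]
    [NormedSpace 𝕂 X] (p : ℝ≥0∞) [Fact (1 ≤ p)] (M : Set X) where
  f : ℕ → M → 𝕂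
  τ : ℕ → M
  f_lip : ∀ n, ∃ K : ℝ≥0, LipschitzWith K (f n)
  θf : M → lp (fun _ : ℕ => 𝕂) p
  θf_apply : ∀ (x : M) (n : ℕ), θf x n = f n x
  θf_lip : ∃ K : ℝ≥0, LipschitzWith K θf
  θτ : lp (fun _ : ℕ => 𝕂) p →L[𝕂] X
  θτ_sum : ∀ a : lp (fun _ : ℕ => 𝕂) p,
    Tendsto (fun N => ∑ n ∈ Finset.range N, a n • ((τ n : X))) atTop (nhds (θτ a))
  S : M → M
  S_sum : ∀ x : M,
    Tendsto (fun N => ∑ n ∈ Finset.range N, f n x • ((τ n : X))) atTop (nhds ((S x : X)))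
  Sinv : M → M
  left_inv : ∀ x, Sinv (S x) = x
  right_inv : ∀ x, S (Sinv x) = x
  S_lip : ∃ K : ℝ≥0, LipschitzWith K S
  Sinv_lip : ∃ K : ℝ≥0, LipschitzWith K Sinv
  recon : ∀ x : M,
    Tendsto (fun N => ∑ n ∈ Finset.range N, f n x • ((Sinv (τ n) : X))) atTop (nhds ((x : X)))


private lemma lip_const_smul {α E 𝕂 : Type*} [PseudoEMetricSpace α] [RCLike 𝕂]
    [NormedAddCommGroup E] [NormedSpace 𝕂 E] (c : 𝕂) {K : ℝ≥0} {f : α → E}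
    (h : LipschitzWith K f) : LipschitzWith (‖c‖₊ * K) fun x => c • f x := by
  intro x y
  calc edist (c • f x) (c • f y) = ‖c‖₊ • edist (f x) (f y) := edist_smul₀ c (f x) (f y)
    _ ≤ ‖c‖₊ • (K * edist x y) := by
        simpa [ENNReal.smul_def] using mul_le_mul_right (h x y) (‖c‖₊ : ℝ≥0∞)
    _ = (‖c‖₊ * K : ℝ≥0) * edist x y := by
        simp [ENNReal.smul_def, mul_assoc]

private lemma lip_const_mul {α 𝕂 : Type*} [PseudoEMetricSpace α] [RCLike 𝕂]
    (c : 𝕂) {K : ℝ≥0} {f : α → 𝕂} (h : LipschitzWith K f) :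
    LipschitzWith (‖c‖₊ * K) fun x => c * f x := by
  simpa [smul_eq_mul] using lip_const_smul c h

/-- General interpolation construction for two orthogonal Lipschitz p-SFs. -/
private lemma interp {𝕂 X : Type*} [RCLike 𝕂] [NormedAddCommGroup X] [NormedSpace 𝕂 X]
    (p : ℝ≥0∞) [Fact (1 ≤ p)] (M : Set X)
    (F G : LipPASF 𝕂 X p M) (hFS : F.S = id) (hGS : G.S = id)
    (horth₁ : ∀ x : M, Tendsto (fun N => ∑ n ∈ Finset.range N, G.f n x • ((F.τ n : X)))
      atTop (nhds (0 : X)))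
    (horth₂ : ∀ x : M, Tendsto (fun N => ∑ n ∈ Finset.range N, F.f n x • ((G.τ n : X)))
      atTop (nhds (0 : X)))
    (a b : 𝕂) (A B : M → M)
    (hA : ∃ K : ℝ≥0, LipschitzWith K A) (hB : ∃ K : ℝ≥0, LipschitzWith K B)
    (C D : X →L[𝕂] X)
    (hCD : ∀ x : M, a • C ((A x : X)) + b • D ((B x : X)) = (x : X))
    (hmem : ∀ n, C ((F.τ n : X)) + D ((G.τ n : X)) ∈ M) :
    ∃ H : LipPASF 𝕂 X p M,
      (∀ n (x : M), H.f n x = a * F.f n (A x) + b * G.f n (B x)) ∧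
      (∀ n, (H.τ n : X) = C ((F.τ n : X)) + D ((G.τ n : X))) ∧
      H.S = id := by
  obtain ⟨KA, hA⟩ := hA
  obtain ⟨KB, hB⟩ := hB
  -- the synthesis operator
  set T : lp (fun _ : ℕ => 𝕂) p →L[𝕂] X := C.comp F.θτ + D.comp G.θτ with hT
  have hTsum : ∀ s : lp (fun _ : ℕ => 𝕂) p,
      Tendsto (fun N => ∑ n ∈ Finset.range N,
        s n • (C ((F.τ n : X)) + D ((G.τ n : X)))) atTop (nhds (T s)) := by
    intro s
    have h1 := ((C.continuous.tendsto _).comp (F.θτ_sum s)).add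
      ((D.continuous.tendsto _).comp (G.θτ_sum s))
    refine (Tendsto.congr (fun N => ?_) h1)
    simp only [Function.comp_apply, map_sum, map_smul, ← Finset.sum_add_distrib, smul_add]
  -- the frame-map limit
  have hSsum : ∀ x : M,
      Tendsto (fun N => ∑ n ∈ Finset.range N,
        (a * F.f n (A x) + b * G.f n (B x)) • (C ((F.τ n : X)) + D ((G.τ n : X))))
        atTop (nhds ((x : X))) := by
    intro x
    have h1 : Tendsto (fun N => a • C (∑ n ∈ Finset.range N, F.f n (A x) • (F.τ n : X)))
        atTop (nhds (a • C ((A x : X)))) := by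
      have := ((C.continuous.tendsto _).comp (F.S_sum (A x))).const_smul a
      simpa [hFS] using this
    have h2 : Tendsto (fun N => a • D (∑ n ∈ Finset.range N, F.f n (A x) • (G.τ n : X)))
        atTop (nhds (0 : X)) := by
      have := ((D.continuous.tendsto _).comp (horth₂ (A x))).const_smul a
      simpa using this
    have h3 : Tendsto (fun N => b • C (∑ n ∈ Finset.range N, G.f n (B x) • (F.τ n : X)))
        atTop (nhds (0 : X)) := by
      have := ((C.continuous.tendsto _).comp (horth₁ (B x))).const_smul b
      simpa using this
    have h4 : Tendsto (fun N => b • D (∑ n ∈ Finset.range N, G.f n (B x) • (G.τ n : X)))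
        atTop (nhds (b • D ((B x : X)))) := by
      have := ((D.continuous.tendsto _).comp (G.S_sum (B x))).const_smul b
      simpa [hGS] using this
    have h := ((h1.add h2).add (h3.add h4))
    have hval : a • C ((A x : X)) + 0 + (0 + b • D ((B x : X))) = (x : X) := by
      simpa using hCD x
    rw [hval] at h
    refine Tendsto.congr (fun N => ?_) h
    simp only [map_sum, map_smul, Finset.smul_sum, ← Finset.sum_add_distrib]
    refine Finset.sum_congr rfl fun n _ => ?_
    simp only [add_smul, smul_add, smul_smul, smul_eq_mul]
    module
  refine ⟨{ f := fun n x => a * F.f n (A x) + b * G.f n (B x)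
            τ := fun n => ⟨_, hmem n⟩
            f_lip := fun n => ?_
            θf := fun x => a • F.θf (A x) + b • G.θf (B x)
            θf_apply := fun x n => ?_
            θf_lip := ?_
            θτ := T
            θτ_sum := fun s => hTsum s
            S := id
            S_sum := fun x => hSsum x
            Sinv := id
            left_inv := fun _ => rfl
            right_inv := fun _ => rfl
            S_lip := ⟨1, LipschitzWith.id⟩
            Sinv_lip := ⟨1, LipschitzWith.id⟩
            recon := fun x => hSsum x }, fun n x => rfl, fun n => rfl, rfl⟩
  · obtain ⟨K1, h1⟩ := F.f_lip n
    obtain ⟨K2, h2⟩ := G.f_lip n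
    exact ⟨_, (lip_const_mul a (h1.comp hA)).add (lip_const_mul b (h2.comp hB))⟩
  · show a * F.θf (A x) n + b * G.θf (B x) n = _
    rw [F.θf_apply, G.θf_apply]
  · obtain ⟨K1, h1⟩ := F.θf_lip
    obtain ⟨K2, h2⟩ := G.θf_lip
    exact ⟨_, (lip_const_smul a (h1.comp hA)).add (lip_const_smul b (h2.comp hB))⟩

/-- Interpolation of two orthogonal Lipschitz p-SFs `(f, τ)` and `(g, ω)`:
if `A, B : M → M` are bi-Lipschitz, `C, D : X → X` are bounded linear with `C(M) ⊆ M`,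
`D(M) ⊆ M`, `CA + DB = I_M` and `Cτₙ + Dωₙ ∈ M`, then `({fₙA + gₙB}, {Cτₙ + Dωₙ})` is a
Lipschitz p-SF for `M`; in particular this holds for scalars `a, b, c, d` with `ca + db = 1`. -/
theorem stmt16 {𝕂 X : Type*} [RCLike 𝕂] [NormedAddCommGroup X] [NormedSpace 𝕂 X]
    [CompleteSpace X] (p : ℝ≥0∞) [Fact (1 ≤ p)] (hp : p ≠ ∞) (M : Set X)
    (F G : LipPASF 𝕂 X p M) (hFS : F.S = id) (hGS : G.S = id)
    (horth₁ : ∀ x : M, Tendsto (fun N => ∑ n ∈ Finset.range N, G.f n x • ((F.τ n : X)))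
      atTop (nhds (0 : X)))
    (horth₂ : ∀ x : M, Tendsto (fun N => ∑ n ∈ Finset.range N, F.f n x • ((G.τ n : X)))
      atTop (nhds (0 : X)))
    (A B : M → M)
    (hA : ∃ K : ℝ≥0, LipschitzWith K A) (hA' : ∃ K : ℝ≥0, AntilipschitzWith K A)
    (hB : ∃ K : ℝ≥0, LipschitzWith K B) (hB' : ∃ K : ℝ≥0, AntilipschitzWith K B)
    (C D : X →L[𝕂] X) (hC : ∀ x ∈ M, C x ∈ M) (hD : ∀ x ∈ M, D x ∈ M)
    (hCD : ∀ x : M, C ((A x : X)) + D ((B x : X)) = (x : X))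
    (hmem : ∀ n, C ((F.τ n : X)) + D ((G.τ n : X)) ∈ M) :
    (∃ H : LipPASF 𝕂 X p M,
      (∀ n (x : M), H.f n x = F.f n (A x) + G.f n (B x)) ∧
      (∀ n, (H.τ n : X) = C ((F.τ n : X)) + D ((G.τ n : X))) ∧
      H.S = id) ∧
    (∀ a b c d : 𝕂, c * a + d * b = 1 →
      (∀ n, c • ((F.τ n : X)) + d • ((G.τ n : X)) ∈ M) →
      ∃ H : LipPASF 𝕂 X p M,
        (∀ n (x : M), H.f n x = a * F.f n x + b * G.f n x) ∧
        (∀ n, (H.τ n : X) = c • ((F.τ n : X)) + d • ((G.τ n : X))) ∧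
        H.S = id) := by
  constructor
  · obtain ⟨H, h1, h2, h3⟩ := interp p M F G hFS hGS horth₁ horth₂ 1 1 A B hA hB C D
      (fun x => by simpa using hCD x) hmem
    exact ⟨H, fun n x => by simpa using h1 n x, h2, h3⟩
  · intro a b c d habcd hmem'
    have key : ∀ x : M, a • (c • ContinuousLinearMap.id 𝕂 X) ((id x : M) : X)
        + b • (d • ContinuousLinearMap.id 𝕂 X) ((id x : M) : X) = (x : X) := by
      intro x
      simp only [ContinuousLinearMap.smul_apply, ContinuousLinearMap.id_apply, id_eq,
        smul_smul]
      rw [← add_smul]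
      rw [show a * c + b * d = 1 by linear_combination habcd]
      exact one_smul 𝕂 _
    obtain ⟨H, h1, h2, h3⟩ := interp p M F G hFS hGS horth₁ horth₂ a b id id
      ⟨1, LipschitzWith.id⟩ ⟨1, LipschitzWith.id⟩
      (c • ContinuousLinearMap.id 𝕂 X) (d • ContinuousLinearMap.id 𝕂 X)
      key (fun n => by simpa using hmem' n)
    exact ⟨H, fun n x => by simpa using h1 n x, fun n => by simpa using h2 n, h3⟩
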